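/- (AGM bound.) Let W be a fractional edge cover of (the hypergraph with vertex set {1,…,d} and edge set) E. Define the join join(R) as the set of all tuples t : {1,…,d} → ℤ such that for every e ∈ E there exists s ∈ R_e with s(i) = t(i) for all i ∈ e. Then join(R) is a finite set and |join(R)| ≤ ∏_{e ∈ E} |R_e|^{W(e)}. -/

import Mathlib

open Classical

/-- Real power with the convention that `0 ^ y = 0` for every exponent `y`
(in particular `0 ^ 0 = 0`); for nonzero base it is the usual real power. -/
noncomputable def pow0 (a y : ℝ) : ℝ := if a = 0 then 0 else Real.rpow a y

lemma holder_aux {ι : Type*} (I : Finset ι) (Z : Finset ℤ) (w : ι → ℝ) (f : ι → ℤ → ℝ)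
    (hw : ∀ e ∈ I, 0 ≤ w e) (hw1 : ∑ e ∈ I, w e = 1)
    (hf : ∀ e ∈ I, ∀ z ∈ Z, 0 ≤ f e z) :
    ∑ z ∈ Z, ∏ e ∈ I, (f e z) ^ (w e) ≤ ∏ e ∈ I, (∑ z ∈ Z, f e z) ^ (w e) := by
  classical
  set S : ι → ℝ := fun e => ∑ z ∈ Z, f e z with hS
  have hS0 : ∀ e ∈ I, 0 ≤ S e := fun e he => Finset.sum_nonneg (fun z hz => hf e he z hz)
  have hRHS : 0 ≤ ∏ e ∈ I, S e ^ w e :=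
    Finset.prod_nonneg fun e he => Real.rpow_nonneg (hS0 e he) _
  by_cases hA : ∃ e ∈ I, S e = 0 ∧ w e ≠ 0
  · obtain ⟨e, heI, hSe, hwe⟩ := hA
    have hfz : ∀ z ∈ Z, f e z = 0 := fun z hz =>
      (Finset.sum_eq_zero_iff_of_nonneg (fun z hz => hf e heI z hz)).1 hSe z hz
    calc ∑ z ∈ Z, ∏ e' ∈ I, (f e' z) ^ (w e') = 0 := by
          apply Finset.sum_eq_zero
          intro z hz
          apply Finset.prod_eq_zero heI
          rw [hfz z hz, Real.zero_rpow hwe]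
      _ ≤ _ := hRHS
  · push_neg at hA
    have key : ∀ z ∈ Z, ∏ e ∈ I, (f e z) ^ (w e)
        = (∏ e ∈ I, S e ^ w e) * ∏ e ∈ I, (f e z / S e) ^ (w e) := by
      intro z hz
      rw [← Finset.prod_mul_distrib]
      apply Finset.prod_congr rfl
      intro e he
      rw [← Real.mul_rpow (hS0 e he) (div_nonneg (hf e he z hz) (hS0 e he))]
      congr 1
      by_cases h : S e = 0
      · have : f e z = 0 :=
          (Finset.sum_eq_zero_iff_of_nonneg (fun z hz => hf e he z hz)).1 h z hz
        rw [this, h]; ring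
      · field_simp
    calc ∑ z ∈ Z, ∏ e ∈ I, (f e z) ^ (w e)
        = (∏ e ∈ I, S e ^ w e) * ∑ z ∈ Z, ∏ e ∈ I, (f e z / S e) ^ (w e) := by
          rw [Finset.mul_sum]; exact Finset.sum_congr rfl key
      _ ≤ (∏ e ∈ I, S e ^ w e) * 1 := by
          apply mul_le_mul_of_nonneg_left _ hRHS
          calc ∑ z ∈ Z, ∏ e ∈ I, (f e z / S e) ^ (w e)
              ≤ ∑ z ∈ Z, ∑ e ∈ I, w e * (f e z / S e) := by
                refine Finset.sum_le_sum fun z hz => ?_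
                exact Real.geom_mean_le_arith_mean_weighted I w _ hw hw1
                  (fun e he => div_nonneg (hf e he z hz) (hS0 e he))
            _ = ∑ e ∈ I, w e * (S e / S e) := by
                rw [Finset.sum_comm]
                refine Finset.sum_congr rfl fun e he => ?_
                rw [← Finset.mul_sum, ← Finset.sum_div]
            _ ≤ ∑ e ∈ I, w e := by
                refine Finset.sum_le_sum fun e he => ?_
                by_cases h : S e = 0
                · rw [hA e he h]; simp
                · rw [div_self h, mul_one]
            _ = 1 := hw1
      _ = _ := (mul_one _)

lemma agm_key {d : ℕ} {ι : Type} (V : Finset (Fin d)) (E : Finset ι)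
    (edge : ι → Finset (Fin d)) (R : ι → Finset (Fin d → ℤ)) (W : ι → ℝ)
    (hsub : ∀ e ∈ E, edge e ⊆ V) (hW : ∀ e ∈ E, 0 ≤ W e)
    (hR : ∀ e ∈ E, (R e).Nonempty)
    (hcov : ∀ i ∈ V, 1 ≤ ∑ e ∈ E.filter (fun e => i ∈ edge e), W e) :
    ∃ J : Finset (Fin d → ℤ),
      (↑J = {t : Fin d → ℤ | (∀ i, i ∉ V → t i = 0) ∧
        ∀ e ∈ E, ∃ s ∈ R e, ∀ i ∈ edge e, s i = t i}) ∧
      (J.card : ℝ) ≤ ∏ e ∈ E, ((R e).card : ℝ) ^ (W e) := by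
  classical
  obtain hVe | ⟨v, hv⟩ := V.eq_empty_or_nonempty
  · subst hVe
    refine ⟨{fun _ => 0}, ?_, ?_⟩
    · ext t
      simp only [Finset.coe_singleton, Set.mem_singleton_iff, Set.mem_setOf_eq]
      constructor
      · rintro rfl
        refine ⟨fun i _ => rfl, fun e he => ?_⟩
        obtain ⟨s, hs⟩ := hR e he
        exact ⟨s, hs, fun i hi => absurd (hsub e he hi) (by simp)⟩
      · rintro ⟨h0, -⟩
        funext i; exact h0 i (by simp)
    · simp only [Finset.card_singleton, Nat.cast_one]
      have := Finset.prod_le_prod (s := E) (f := fun _ => (1:ℝ))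
        (g := fun e => ((R e).card : ℝ) ^ (W e)) (fun _ _ => zero_le_one)
        (fun e he => Real.one_le_rpow (by exact_mod_cast (hR e he).card_pos) (hW e he))
      simpa using this
  · -- inductive step
    have hI : (E.filter (fun e => v ∈ edge e)).Nonempty := by
      rw [Finset.nonempty_iff_ne_empty]
      intro h
      have h1 := hcov v hv
      rw [h, Finset.sum_empty] at h1
      linarith
    set I : Finset ι := E.filter (fun e => v ∈ edge e) with hIdef
    obtain ⟨e0, he0⟩ := hI
    set Z : Finset ℤ := ((R e0).image fun s => s v).filter
      (fun z => ∀ e ∈ I, ∃ s ∈ R e, s v = z) with hZdef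
    have hZmem : ∀ z : ℤ, z ∈ Z ↔ ∀ e ∈ I, ∃ s ∈ R e, s v = z := by
      intro z
      rw [hZdef, Finset.mem_filter]
      constructor
      · exact fun h => h.2
      · intro h
        obtain ⟨s, hs, hsv⟩ := h e0 he0
        exact ⟨Finset.mem_image.2 ⟨s, hs, hsv⟩, h⟩
    have H : ∀ z ∈ Z, ∃ J : Finset (Fin d → ℤ),
        (↑J = {t : Fin d → ℤ | (∀ i, i ∉ V.erase v → t i = 0) ∧
          ∀ e ∈ E, ∃ s ∈ (if v ∈ edge e then (R e).filter (fun s => s v = z) else R e),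
            ∀ i ∈ (edge e).erase v, s i = t i}) ∧
        (J.card : ℝ) ≤ ∏ e ∈ E,
          (((if v ∈ edge e then (R e).filter (fun s => s v = z) else R e).card : ℝ)) ^ (W e) := by
      intro z hz
      apply agm_key (V.erase v) E (fun e => (edge e).erase v)
        (fun e => if v ∈ edge e then (R e).filter (fun s => s v = z) else R e) W
      · intro e he
        exact Finset.erase_subset_erase v (hsub e he)
      · exact hW
      · intro e he
        by_cases hve : v ∈ edge e
        · simp only [if_pos hve]
          obtain ⟨s, hs, hsv⟩ := (hZmem z).1 hz e (Finset.mem_filter.2 ⟨he, hve⟩)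
          exact ⟨s, Finset.mem_filter.2 ⟨hs, hsv⟩⟩
        · simp only [if_neg hve]; exact hR e he
      · intro i hi
        have hiV : i ∈ V := Finset.mem_of_mem_erase hi
        have hiv : i ≠ v := Finset.ne_of_mem_erase hi
        have heq : E.filter (fun e => i ∈ (edge e).erase v) = E.filter (fun e => i ∈ edge e) := by
          refine Finset.filter_congr fun e he => ?_
          simp [Finset.mem_erase, hiv]
        rw [heq]
        exact hcov i hiV
    choose F hF1 hF2 using H
    refine ⟨Z.attach.biUnion fun z => (F z.1 z.2).image fun t => Function.update t v z.1, ?_, ?_⟩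
    · ext t
      constructor
      · intro htmem
        rw [Finset.mem_coe, Finset.mem_biUnion] at htmem
        obtain ⟨⟨z, hzZ⟩, -, himg⟩ := htmem
        rw [Finset.mem_image] at himg
        obtain ⟨t', ht', rfl⟩ := himg
        have hmem : t' ∈ (↑(F z hzZ) : Set (Fin d → ℤ)) := ht'
        rw [hF1 z hzZ] at hmem
        obtain ⟨h0, hcons⟩ := hmem
        constructor
        · intro i hiV
          have hiv : i ≠ v := fun h => hiV (h ▸ hv)
          rw [Function.update_of_ne hiv]
          exact h0 i (fun hi' => hiV (Finset.mem_of_mem_erase hi'))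
        · intro e he
          obtain ⟨s, hs, hmatch⟩ := hcons e he
          by_cases hve : v ∈ edge e
          · rw [if_pos hve] at hs
            obtain ⟨hsR, hsv⟩ := Finset.mem_filter.1 hs
            refine ⟨s, hsR, fun i hie => ?_⟩
            by_cases hiv : i = v
            · subst hiv; rw [Function.update_self]; exact hsv
            · rw [Function.update_of_ne hiv]
              exact hmatch i (Finset.mem_erase.2 ⟨hiv, hie⟩)
          · rw [if_neg hve] at hs
            refine ⟨s, hs, fun i hie => ?_⟩
            have hiv : i ≠ v := fun h => hve (h ▸ hie)
            rw [Function.update_of_ne hiv]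
            exact hmatch i (Finset.mem_erase.2 ⟨hiv, hie⟩)
      · intro htmem
        obtain ⟨h0, hcons⟩ := htmem
        have hzZ : t v ∈ Z := by
          rw [hZmem]
          intro e he
          obtain ⟨heE, hve⟩ := Finset.mem_filter.1 he
          obtain ⟨s, hs, hmatch⟩ := hcons e heE
          exact ⟨s, hs, hmatch v hve⟩
        rw [Finset.mem_coe, Finset.mem_biUnion]
        refine ⟨⟨t v, hzZ⟩, Finset.mem_attach _ _, Finset.mem_image.2
          ⟨Function.update t v 0, ?_, ?_⟩⟩
        · have : Function.update t v 0 ∈ (↑(F (t v) hzZ) : Set (Fin d → ℤ)) := by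
            rw [hF1 (t v) hzZ]
            constructor
            · intro i hi
              by_cases hiv : i = v
              · subst hiv; rw [Function.update_self]
              · rw [Function.update_of_ne hiv]
                refine h0 i fun hiV => hi (Finset.mem_erase.2 ⟨hiv, hiV⟩)
            · intro e he
              obtain ⟨s, hs, hmatch⟩ := hcons e he
              by_cases hve : v ∈ edge e
              · refine ⟨s, ?_, fun i hie => ?_⟩
                · rw [if_pos hve]
                  exact Finset.mem_filter.2 ⟨hs, hmatch v hve⟩
                · obtain ⟨hiv, hie'⟩ := Finset.mem_erase.1 hie
                  rw [Function.update_of_ne hiv]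
                  exact hmatch i hie'
              · refine ⟨s, ?_, fun i hie => ?_⟩
                · rw [if_neg hve]; exact hs
                · obtain ⟨hiv, hie'⟩ := Finset.mem_erase.1 hie
                  rw [Function.update_of_ne hiv]
                  exact hmatch i hie'
          exact this
        · funext i
          by_cases hiv : i = v
          · subst hiv; rw [Function.update_self]
          · rw [Function.update_of_ne hiv, Function.update_of_ne hiv]
    · -- cardinality bound
      set n : ι → ℤ → ℕ := fun e z => ((R e).filter fun s => s v = z).card with hndef
      set m : ℤ → ι → ℝ := fun z e =>
        (((if v ∈ edge e then (R e).filter (fun s => s v = z) else R e).card : ℝ)) with hmdef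
      set C : ℝ := ∏ e ∈ E.filter (fun e => ¬ v ∈ edge e), ((R e).card : ℝ) ^ (W e) with hCdef
      have hWI : ∀ e ∈ I, 0 ≤ W e := fun e he => hW e (Finset.mem_filter.1 he).1
      have hC0 : 0 ≤ C :=
        Finset.prod_nonneg fun e _ => Real.rpow_nonneg (Nat.cast_nonneg _) _
      have hcard1 : ((Z.attach.biUnion fun z =>
            (F z.1 z.2).image fun t => Function.update t v z.1).card : ℝ)
          ≤ ∑ z ∈ Z.attach, ((F z.1 z.2).card : ℝ) := by
        have h1 := Finset.card_biUnion_le (s := Z.attach)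
          (t := fun z => (F z.1 z.2).image fun t => Function.update t v z.1)
        have h2 : ∑ z ∈ Z.attach, ((F z.1 z.2).image fun t => Function.update t v z.1).card
            ≤ ∑ z ∈ Z.attach, (F z.1 z.2).card :=
          Finset.sum_le_sum fun z _ => Finset.card_image_le
        exact_mod_cast le_trans h1 h2
      have hcard2 : ∑ z ∈ Z.attach, ((F z.1 z.2).card : ℝ)
          ≤ ∑ z ∈ Z, ∏ e ∈ E, (m z e) ^ (W e) := by
        rw [← Finset.sum_attach Z (fun z => ∏ e ∈ E, (m z e) ^ (W e))]
        exact Finset.sum_le_sum fun z _ => hF2 z.1 z.2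
      have hsplit : ∀ z : ℤ, ∏ e ∈ E, (m z e) ^ (W e)
          = (∏ e ∈ I, ((n e z : ℝ)) ^ (W e)) * C := by
        intro z
        rw [← Finset.prod_filter_mul_prod_filter_not E (fun e => v ∈ edge e)
          (fun e => (m z e) ^ (W e)), hCdef, ← hIdef]
        congr 1
        · refine Finset.prod_congr rfl fun e he => ?_
          have hve := (Finset.mem_filter.1 he).2
          rw [hmdef]
          simp only [if_pos hve, hndef]
        · refine Finset.prod_congr rfl fun e he => ?_
          have hve := (Finset.mem_filter.1 he).2
          rw [hmdef]
          simp only [if_neg hve]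
      -- the main claim over I
      have hp : 1 ≤ ∑ e ∈ I, W e := hcov v hv
      have hppos : (0:ℝ) < ∑ e ∈ I, W e := by linarith
      set w' : ι → ℝ := fun e => W e / (∑ e ∈ I, W e) with hw'def
      have hw'sum : ∑ e ∈ I, w' e = 1 := by
        rw [hw'def, ← Finset.sum_div, div_self (ne_of_gt hppos)]
      have hw'nonneg : ∀ e ∈ I, 0 ≤ w' e := fun e he => div_nonneg (hWI e he) (le_of_lt hppos)
      have hw'le : ∀ e ∈ I, w' e ≤ W e := fun e he => div_le_self (hWI e he) hp
      have hn1 : ∀ e ∈ I, ∀ z ∈ Z, (1:ℝ) ≤ (n e z : ℝ) := by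
        intro e he z hz
        obtain ⟨s, hs, hsv⟩ := (hZmem z).1 hz e he
        have hne : ((R e).filter fun s => s v = z).Nonempty :=
          ⟨s, Finset.mem_filter.2 ⟨hs, hsv⟩⟩
        exact_mod_cast hne.card_pos
      have hnle : ∀ (e : ι) (z : ℤ), (n e z : ℝ) ≤ ((R e).card : ℝ) := by
        intro e z
        exact_mod_cast Finset.card_filter_le _ _
      have hRpos : ∀ e ∈ I, (0:ℝ) < ((R e).card : ℝ) := fun e he => by
        exact_mod_cast (hR e (Finset.mem_filter.1 he).1).card_pos
      set D : ℝ := ∏ e ∈ I, ((R e).card : ℝ) ^ (W e - w' e) with hDdef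
      have hD0 : 0 ≤ D := Finset.prod_nonneg fun e _ => Real.rpow_nonneg (Nat.cast_nonneg _) _
      have hsum_le : ∀ e ∈ I, ∑ z ∈ Z, (n e z : ℝ) ≤ ((R e).card : ℝ) := by
        intro e _
        have hfib : ((R e).filter fun s => s v ∈ Z).card
            = ∑ z ∈ Z, (((R e).filter fun s => s v ∈ Z).filter fun s => s v = z).card :=
          Finset.card_eq_sum_card_fiberwise (fun s hs => (Finset.mem_filter.1 hs).2)
        have h2 : ∀ z ∈ Z, ((R e).filter fun s => s v ∈ Z).filter (fun s => s v = z)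
            = (R e).filter fun s => s v = z := by
          intro z hz
          rw [Finset.filter_filter]
          exact Finset.filter_congr fun s _ => ⟨And.right, fun h => ⟨h ▸ hz, h⟩⟩
        have : ∑ z ∈ Z, n e z ≤ (R e).card := by
          calc ∑ z ∈ Z, n e z
              = ((R e).filter fun s => s v ∈ Z).card := by
                rw [hfib]
                exact Finset.sum_congr rfl fun z hz => by rw [h2 z hz]
            _ ≤ (R e).card := Finset.card_filter_le _ _
        exact_mod_cast this
      have step : ∀ z ∈ Z, ∏ e ∈ I, ((n e z : ℝ)) ^ (W e)
          ≤ D * ∏ e ∈ I, ((n e z : ℝ)) ^ (w' e) := by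
        intro z hz
        have : ∏ e ∈ I, ((n e z : ℝ)) ^ (W e)
            = ∏ e ∈ I, (((n e z : ℝ)) ^ (W e - w' e) * ((n e z : ℝ)) ^ (w' e)) := by
          refine Finset.prod_congr rfl fun e he => ?_
          rw [← Real.rpow_add (lt_of_lt_of_le zero_lt_one (hn1 e he z hz))]
          congr 1
          ring
        rw [this, Finset.prod_mul_distrib, hDdef]
        refine mul_le_mul_of_nonneg_right ?_
          (Finset.prod_nonneg fun e he => Real.rpow_nonneg (Nat.cast_nonneg _) _)
        refine Finset.prod_le_prod (fun e he => Real.rpow_nonneg (Nat.cast_nonneg _) _)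
          fun e he => ?_
        exact Real.rpow_le_rpow (Nat.cast_nonneg _) (hnle e z) (sub_nonneg.2 (hw'le e he))
      have claim : ∑ z ∈ Z, ∏ e ∈ I, ((n e z : ℝ)) ^ (W e)
          ≤ ∏ e ∈ I, ((R e).card : ℝ) ^ (W e) := by
        calc ∑ z ∈ Z, ∏ e ∈ I, ((n e z : ℝ)) ^ (W e)
            ≤ ∑ z ∈ Z, (D * ∏ e ∈ I, ((n e z : ℝ)) ^ (w' e)) :=
              Finset.sum_le_sum step
          _ = D * ∑ z ∈ Z, ∏ e ∈ I, ((n e z : ℝ)) ^ (w' e) := by rw [Finset.mul_sum]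
          _ ≤ D * ∏ e ∈ I, (∑ z ∈ Z, (n e z : ℝ)) ^ (w' e) := by
              refine mul_le_mul_of_nonneg_left ?_ hD0
              exact holder_aux I Z w' (fun e z => (n e z : ℝ)) hw'nonneg hw'sum
                (fun e _ z _ => Nat.cast_nonneg _)
          _ ≤ D * ∏ e ∈ I, ((R e).card : ℝ) ^ (w' e) := by
              refine mul_le_mul_of_nonneg_left ?_ hD0
              refine Finset.prod_le_prod
                (fun e he => Real.rpow_nonneg (Finset.sum_nonneg fun z _ => Nat.cast_nonneg _) _)
                fun e he => ?_
              exact Real.rpow_le_rpow (Finset.sum_nonneg fun z _ => Nat.cast_nonneg _)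
                (hsum_le e he) (hw'nonneg e he)
          _ = ∏ e ∈ I, ((R e).card : ℝ) ^ (W e) := by
              rw [hDdef, ← Finset.prod_mul_distrib]
              refine Finset.prod_congr rfl fun e he => ?_
              rw [← Real.rpow_add (hRpos e he)]
              congr 1
              ring
      calc ((Z.attach.biUnion fun z =>
            (F z.1 z.2).image fun t => Function.update t v z.1).card : ℝ)
          ≤ ∑ z ∈ Z, ∏ e ∈ E, (m z e) ^ (W e) := le_trans hcard1 hcard2
        _ = (∑ z ∈ Z, ∏ e ∈ I, ((n e z : ℝ)) ^ (W e)) * C := by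
            rw [Finset.sum_mul]
            exact Finset.sum_congr rfl fun z _ => hsplit z
        _ ≤ (∏ e ∈ I, ((R e).card : ℝ) ^ (W e)) * C :=
            mul_le_mul_of_nonneg_right claim hC0
        _ = ∏ e ∈ E, ((R e).card : ℝ) ^ (W e) := by
            rw [hCdef, hIdef]
            exact Finset.prod_filter_mul_prod_filter_not E (fun e => v ∈ edge e) _
termination_by V.card
decreasing_by exact Finset.card_erase_lt_of_mem hv


theorem agm_bound
    (d : ℕ) (hd : 0 < d)
    (E : Finset (Finset (Fin d))) (hE : E.Nonempty) (hEne : ∀ e ∈ E, e.Nonempty)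
    (R : Finset (Fin d) → Finset (Fin d → ℤ))
    (W : Finset (Fin d) → ℝ) (hW : ∀ e ∈ E, 0 ≤ W e)
    (hcov : ∀ i : Fin d, 1 ≤ ∑ e ∈ E.filter (fun e => i ∈ e), W e) :
    {t : Fin d → ℤ | ∀ e ∈ E, ∃ s ∈ R e, ∀ i ∈ e, s i = t i}.Finite ∧
      ({t : Fin d → ℤ | ∀ e ∈ E, ∃ s ∈ R e, ∀ i ∈ e, s i = t i}.ncard : ℝ)
        ≤ ∏ e ∈ E, pow0 ((R e).card : ℝ) (W e) := by
  classical
  by_cases hRne : ∀ e ∈ E, (R e).Nonempty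
  · obtain ⟨J, hJ1, hJ2⟩ := agm_key (d := d) (ι := Finset (Fin d)) Finset.univ E
      (fun e => e) R W (fun e _ => Finset.subset_univ _) hW hRne (fun i _ => hcov i)
    have hset : {t : Fin d → ℤ | ∀ e ∈ E, ∃ s ∈ R e, ∀ i ∈ e, s i = t i} = ↑J := by
      rw [hJ1]
      ext t
      constructor
      · intro h
        exact ⟨fun i hi => absurd (Finset.mem_univ i) hi, h⟩
      · exact fun h => h.2
    constructor
    · rw [hset]; exact J.finite_toSet
    · rw [hset, Set.ncard_coe_finset]
      refine le_trans hJ2 (le_of_eq (Finset.prod_congr rfl fun e he => ?_))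
      have hne : ((R e).card : ℝ) ≠ 0 := by
        exact_mod_cast Nat.pos_iff_ne_zero.1 (hRne e he).card_pos
      simp only [pow0, if_neg hne]
      rfl
  · push_neg at hRne
    obtain ⟨e, heE, heR⟩ := hRne
    have hSempty : {t : Fin d → ℤ | ∀ e ∈ E, ∃ s ∈ R e, ∀ i ∈ e, s i = t i} = ∅ := by
      ext t
      simp only [Set.mem_setOf_eq, Set.mem_empty_iff_false, iff_false]
      intro h
      obtain ⟨s, hs, -⟩ := h e heE
      simp [heR] at hs
    rw [hSempty]
    refine ⟨Set.finite_empty, ?_⟩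
    simp only [Set.ncard_empty, Nat.cast_zero]
    refine Finset.prod_nonneg fun e _ => ?_
    simp only [pow0]
    split
    · exact le_refl 0
    · exact Real.rpow_nonneg (Nat.cast_nonneg _) _
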